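/- Let $\Omega=(0,1)$ and let $v_1,v_2$ be classical solutions on $[0,T]\times\overline\Omega$ of $\partial_t v_i = v_{ixx} - u_i v_i$ with Neumann boundary conditions $v_{ix}(t,0)=v_{ix}(t,1)=0$ and $v_1(0,\cdot)=v_2(0,\cdot)$, where $u_1,u_2$ are continuous and nonnegative and $0 < v_i \le K$. Writing $u_1-u_2 = (w_{1x}-w_{2x}) - (v_1-v_2)$ with $w_i(t,x)=\int_0^x(u_i+v_i)dy$, one has for all $t\in[0,T]$: $\int_\Omega \tfrac12 (v_1-v_2)^2\,dx + \int_0^t\int_\Omega (v_{1x}-v_{2x})^2\,dx\,ds \le -\int_0^t\int_\Omega (w_{1x}-w_{2x}) v_1 (v_1-v_2)\,dx\,ds + \int_0^t\int_\Omega v_1 (v_1-v_2)^2\,dx\,ds - \int_0^t\int_\Omega u_2 (v_1-v_2)^2\,dx\,ds$. -/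

import Mathlib

open MeasureTheory Set intervalIntegral

section Aux

lemma aux_joint_cont {T M L : ℝ} {v vt vx : ℝ → ℝ → ℝ}
    (hM0 : 0 ≤ M) (hL0 : 0 ≤ L)
    (ht : ∀ t ∈ Icc (0:ℝ) T, ∀ x ∈ Icc (0:ℝ) 1,
      HasDerivWithinAt (fun τ => v τ x) (vt t x) (Icc 0 T) t)
    (hx : ∀ t ∈ Icc (0:ℝ) T, ∀ x ∈ Icc (0:ℝ) 1,
      HasDerivWithinAt (v t) (vx t x) (Icc 0 1) x)
    (hM : ∀ t ∈ Icc (0:ℝ) T, ∀ x ∈ Icc (0:ℝ) 1, |vt t x| ≤ M)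
    (hL : ∀ t ∈ Icc (0:ℝ) T, ∀ x ∈ Icc (0:ℝ) 1, |vx t x| ≤ L) :
    ContinuousOn (fun p : ℝ × ℝ => v p.1 p.2) (Icc 0 T ×ˢ Icc 0 1) := by
  have key : ∀ p ∈ Icc (0:ℝ) T ×ˢ Icc (0:ℝ) 1, ∀ q ∈ Icc (0:ℝ) T ×ˢ Icc (0:ℝ) 1,
      |v p.1 p.2 - v q.1 q.2| ≤ M * |p.1 - q.1| + L * |p.2 - q.2| := by
    rintro ⟨a, b⟩ ⟨ha, hb⟩ ⟨c, e⟩ ⟨hc, he⟩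
    have h1 : |v a b - v c b| ≤ M * |a - c| := by
      have := Convex.norm_image_sub_le_of_norm_hasDerivWithin_le
        (f := fun τ => v τ b) (f' := fun τ => vt τ b)
        (fun τ hτ => ht τ hτ b hb) (fun τ hτ => by simpa using hM τ hτ b hb)
        (convex_Icc 0 T) hc ha
      simpa [Real.norm_eq_abs] using this
    have h2 : |v c b - v c e| ≤ L * |b - e| := by
      have := Convex.norm_image_sub_le_of_norm_hasDerivWithin_le
        (f := v c) (f' := vx c)
        (fun y hy => hx c hc y hy) (fun y hy => by simpa using hL c hc y hy)
        (convex_Icc 0 1) he hb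
      simpa [Real.norm_eq_abs] using this
    calc |v a b - v c e| ≤ |v a b - v c b| + |v c b - v c e| := abs_sub_le _ _ _
      _ ≤ M * |a - c| + L * |b - e| := add_le_add h1 h2
  rw [Metric.continuousOn_iff]
  intro p hp ε hε
  refine ⟨ε / (M + L + 1), by positivity, fun q hq hd => ?_⟩
  have h1 : |q.1 - p.1| ≤ dist q p := by
    rw [← Real.dist_eq]; exact le_trans (le_max_left _ _) (le_of_eq Prod.dist_eq.symm)
  have h2 : |q.2 - p.2| ≤ dist q p := by
    rw [← Real.dist_eq]; exact le_trans (le_max_right _ _) (le_of_eq Prod.dist_eq.symm)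
  have hdn : (0:ℝ) ≤ dist q p := dist_nonneg
  calc dist (v q.1 q.2) (v p.1 p.2) = |v q.1 q.2 - v p.1 p.2| := Real.dist_eq _ _
    _ ≤ M * |q.1 - p.1| + L * |q.2 - p.2| := key q hq p hp
    _ ≤ (M + L) * dist q p := by nlinarith [mul_le_mul_of_nonneg_left h1 hM0,
        mul_le_mul_of_nonneg_left h2 hL0]
    _ < ε := by
        have := (lt_div_iff₀ (by positivity : (0:ℝ) < M + L + 1)).mp hd
        nlinarith

lemma aux_prod_int {t T : ℝ} (ht0 : 0 ≤ t) (htT : t ≤ T) {H : ℝ → ℝ → ℝ}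
    (hH : ContinuousOn (fun p : ℝ × ℝ => H p.1 p.2) (Icc 0 T ×ˢ Icc 0 1)) :
    Integrable (fun p : ℝ × ℝ => H p.2 p.1)
      ((volume.restrict (Ioc (0:ℝ) 1)).prod (volume.restrict (Ioc 0 t))) := by
  rw [Measure.prod_restrict]
  have hc : ContinuousOn (fun p : ℝ × ℝ => H p.2 p.1) (Icc (0:ℝ) 1 ×ˢ Icc 0 T) := by
    have := hH.comp (continuous_swap.continuousOn (s := Icc (0:ℝ) 1 ×ˢ Icc 0 T))
      (fun p hp => ⟨hp.2, hp.1⟩)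
    exact this
  exact (hc.integrableOn_compact (isCompact_Icc.prod isCompact_Icc)).mono_set
    (Set.prod_mono Ioc_subset_Icc_self
      ((Ioc_subset_Icc_self).trans (Icc_subset_Icc le_rfl htT)))

lemma aux_time_int {t T : ℝ} (ht0 : 0 ≤ t) (htT : t ≤ T) {H : ℝ → ℝ → ℝ}
    (hH : ContinuousOn (fun p : ℝ × ℝ => H p.1 p.2) (Icc 0 T ×ˢ Icc 0 1)) :
    IntervalIntegrable (fun s => ∫ x in (0:ℝ)..1, H s x) volume 0 t := by
  have h := (aux_prod_int ht0 htT hH).integral_prod_right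
  rw [intervalIntegrable_iff, uIoc_of_le ht0]
  have : (fun s => ∫ x in (0:ℝ)..1, H s x) = fun s => ∫ x in Ioc (0:ℝ) 1, H s x := by
    funext s; rw [intervalIntegral.integral_of_le zero_le_one]
  rw [this]
  exact h

end Aux

open MeasureTheory

/-- Energy inequality for the difference of the nutrient equations (Step 2 of Lemma 4). -/
theorem stmt13 (T K : ℝ) (hT : 0 < T) (u1 u2 v1 v2 v1x v2x v1xx v2xx : ℝ → ℝ → ℝ)
    (hu1_cont : ContinuousOn (fun p : ℝ × ℝ => u1 p.1 p.2) (Set.Icc 0 T ×ˢ Set.Icc 0 1))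
    (hu2_cont : ContinuousOn (fun p : ℝ × ℝ => u2 p.1 p.2) (Set.Icc 0 T ×ˢ Set.Icc 0 1))
    (hu1_nonneg : ∀ t ∈ Set.Icc (0:ℝ) T, ∀ x ∈ Set.Icc (0:ℝ) 1, 0 ≤ u1 t x)
    (hu2_nonneg : ∀ t ∈ Set.Icc (0:ℝ) T, ∀ x ∈ Set.Icc (0:ℝ) 1, 0 ≤ u2 t x)
    (hv1_pos : ∀ t ∈ Set.Icc (0:ℝ) T, ∀ x ∈ Set.Icc (0:ℝ) 1, 0 < v1 t x ∧ v1 t x ≤ K)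
    (hv2_pos : ∀ t ∈ Set.Icc (0:ℝ) T, ∀ x ∈ Set.Icc (0:ℝ) 1, 0 < v2 t x ∧ v2 t x ≤ K)
    -- classical regularity of v₁, v₂
    (hv1x : ∀ t ∈ Set.Icc (0:ℝ) T, ∀ x ∈ Set.Icc (0:ℝ) 1,
      HasDerivWithinAt (v1 t) (v1x t x) (Set.Icc 0 1) x)
    (hv2x : ∀ t ∈ Set.Icc (0:ℝ) T, ∀ x ∈ Set.Icc (0:ℝ) 1,
      HasDerivWithinAt (v2 t) (v2x t x) (Set.Icc 0 1) x)
    (hv1xx : ∀ t ∈ Set.Icc (0:ℝ) T, ∀ x ∈ Set.Icc (0:ℝ) 1,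
      HasDerivWithinAt (v1x t) (v1xx t x) (Set.Icc 0 1) x)
    (hv2xx : ∀ t ∈ Set.Icc (0:ℝ) T, ∀ x ∈ Set.Icc (0:ℝ) 1,
      HasDerivWithinAt (v2x t) (v2xx t x) (Set.Icc 0 1) x)
    (hv1x_cont : ContinuousOn (fun p : ℝ × ℝ => v1x p.1 p.2) (Set.Icc 0 T ×ˢ Set.Icc 0 1))
    (hv2x_cont : ContinuousOn (fun p : ℝ × ℝ => v2x p.1 p.2) (Set.Icc 0 T ×ˢ Set.Icc 0 1))
    (hv1xx_cont : ContinuousOn (fun p : ℝ × ℝ => v1xx p.1 p.2) (Set.Icc 0 T ×ˢ Set.Icc 0 1))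
    (hv2xx_cont : ContinuousOn (fun p : ℝ × ℝ => v2xx p.1 p.2) (Set.Icc 0 T ×ˢ Set.Icc 0 1))
    -- the PDEs `∂ₜ vᵢ = vᵢₓₓ - uᵢ vᵢ`
    (hv1t : ∀ t ∈ Set.Icc (0:ℝ) T, ∀ x ∈ Set.Icc (0:ℝ) 1,
      HasDerivWithinAt (fun τ => v1 τ x) (v1xx t x - u1 t x * v1 t x) (Set.Icc 0 T) t)
    (hv2t : ∀ t ∈ Set.Icc (0:ℝ) T, ∀ x ∈ Set.Icc (0:ℝ) 1,
      HasDerivWithinAt (fun τ => v2 τ x) (v2xx t x - u2 t x * v2 t x) (Set.Icc 0 T) t)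
    -- Neumann boundary conditions and identical initial data
    (hbc : ∀ t ∈ Set.Icc (0:ℝ) T,
      v1x t 0 = 0 ∧ v1x t 1 = 0 ∧ v2x t 0 = 0 ∧ v2x t 1 = 0)
    (hinit : ∀ x ∈ Set.Icc (0:ℝ) 1, v1 0 x = v2 0 x) :
    -- conclusion, with `wᵢₓ = uᵢ + vᵢ`
    ∀ t ∈ Set.Icc (0:ℝ) T,
      (∫ x in (0:ℝ)..1, (1/2) * (v1 t x - v2 t x)^2)
        + (∫ s in (0:ℝ)..t, ∫ x in (0:ℝ)..1, (v1x s x - v2x s x)^2)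
      ≤ -(∫ s in (0:ℝ)..t, ∫ x in (0:ℝ)..1,
            ((u1 s x + v1 s x) - (u2 s x + v2 s x)) * v1 s x * (v1 s x - v2 s x))
        + (∫ s in (0:ℝ)..t, ∫ x in (0:ℝ)..1, v1 s x * (v1 s x - v2 s x)^2)
        - (∫ s in (0:ℝ)..t, ∫ x in (0:ℝ)..1, u2 s x * (v1 s x - v2 s x)^2) := by
  intro t ht
  obtain ⟨ht0, htT⟩ := ht
  have hI0 : (0:ℝ) ∈ Icc (0:ℝ) T := ⟨le_rfl, hT.le⟩
  have hJ0 : (0:ℝ) ∈ Icc (0:ℝ) 1 := ⟨le_rfl, zero_le_one⟩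
  have hK : 0 < K := lt_of_lt_of_le (hv1_pos 0 hI0 0 hJ0).1 (hv1_pos 0 hI0 0 hJ0).2
  -- bounds on compact rectangle
  obtain ⟨C1, hC1⟩ := (isCompact_Icc.prod isCompact_Icc).exists_bound_of_continuousOn hv1xx_cont
  obtain ⟨C2, hC2⟩ := (isCompact_Icc.prod isCompact_Icc).exists_bound_of_continuousOn hv2xx_cont
  obtain ⟨C3, hC3⟩ := (isCompact_Icc.prod isCompact_Icc).exists_bound_of_continuousOn hu1_cont
  obtain ⟨C4, hC4⟩ := (isCompact_Icc.prod isCompact_Icc).exists_bound_of_continuousOn hu2_cont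
  obtain ⟨C5, hC5⟩ := (isCompact_Icc.prod isCompact_Icc).exists_bound_of_continuousOn hv1x_cont
  obtain ⟨C6, hC6⟩ := (isCompact_Icc.prod isCompact_Icc).exists_bound_of_continuousOn hv2x_cont
  -- joint continuity of v1 and v2
  have hv1c : ContinuousOn (fun p : ℝ × ℝ => v1 p.1 p.2) (Icc 0 T ×ˢ Icc 0 1) := by
    refine aux_joint_cont (M := max (C1 + C3 * K) 0) (L := max C5 0)
      (le_max_right _ _) (le_max_right _ _) hv1t hv1x ?_ ?_
    · intro s hs x hx
      refine le_trans ?_ (le_max_left _ _)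
      have h1 : |v1xx s x| ≤ C1 := by simpa [Real.norm_eq_abs] using hC1 (s, x) ⟨hs, hx⟩
      have h3 : |u1 s x| ≤ C3 := by simpa [Real.norm_eq_abs] using hC3 (s, x) ⟨hs, hx⟩
      have hv := hv1_pos s hs x hx
      have hu := hu1_nonneg s hs x hx
      have habs : |u1 s x * v1 s x| ≤ C3 * K := by
        rw [abs_mul]
        exact mul_le_mul h3 (by rw [abs_of_pos hv.1]; exact hv.2) (abs_nonneg _)
          ((abs_nonneg _).trans h3)
      calc |v1xx s x - u1 s x * v1 s x| ≤ |v1xx s x| + |u1 s x * v1 s x| := abs_sub _ _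
        _ ≤ C1 + C3 * K := add_le_add h1 habs
    · intro s hs x hx
      refine le_trans ?_ (le_max_left _ _)
      simpa [Real.norm_eq_abs] using hC5 (s, x) ⟨hs, hx⟩
  have hv2c : ContinuousOn (fun p : ℝ × ℝ => v2 p.1 p.2) (Icc 0 T ×ˢ Icc 0 1) := by
    refine aux_joint_cont (M := max (C2 + C4 * K) 0) (L := max C6 0)
      (le_max_right _ _) (le_max_right _ _) hv2t hv2x ?_ ?_
    · intro s hs x hx
      refine le_trans ?_ (le_max_left _ _)
      have h1 : |v2xx s x| ≤ C2 := by simpa [Real.norm_eq_abs] using hC2 (s, x) ⟨hs, hx⟩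
      have h3 : |u2 s x| ≤ C4 := by simpa [Real.norm_eq_abs] using hC4 (s, x) ⟨hs, hx⟩
      have hv := hv2_pos s hs x hx
      have hu := hu2_nonneg s hs x hx
      have habs : |u2 s x * v2 s x| ≤ C4 * K := by
        rw [abs_mul]
        exact mul_le_mul h3 (by rw [abs_of_pos hv.1]; exact hv.2) (abs_nonneg _)
          ((abs_nonneg _).trans h3)
      calc |v2xx s x - u2 s x * v2 s x| ≤ |v2xx s x| + |u2 s x * v2 s x| := abs_sub _ _
        _ ≤ C2 + C4 * K := add_le_add h1 habs
    · intro s hs x hx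
      refine le_trans ?_ (le_max_left _ _)
      simpa [Real.norm_eq_abs] using hC6 (s, x) ⟨hs, hx⟩
  -- slice continuity helpers
  have sliceT : ∀ {f : ℝ → ℝ → ℝ},
      ContinuousOn (fun p : ℝ × ℝ => f p.1 p.2) (Icc 0 T ×ˢ Icc 0 1) →
      ∀ x ∈ Icc (0:ℝ) 1, ContinuousOn (fun s => f s x) (Icc 0 T) := by
    intro f hf x hx
    exact hf.comp ((continuous_id.prodMk continuous_const).continuousOn)
      (fun s hs => ⟨hs, hx⟩)
  have sliceX : ∀ {f : ℝ → ℝ → ℝ},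
      ContinuousOn (fun p : ℝ × ℝ => f p.1 p.2) (Icc 0 T ×ˢ Icc 0 1) →
      ∀ s ∈ Icc (0:ℝ) T, ContinuousOn (fun x => f s x) (Icc 0 1) := by
    intro f hf s hs
    exact hf.comp ((continuous_const.prodMk continuous_id).continuousOn)
      (fun x hx => ⟨hs, hx⟩)
  have xint : ∀ {f : ℝ → ℝ → ℝ},
      ContinuousOn (fun p : ℝ × ℝ => f p.1 p.2) (Icc 0 T ×ˢ Icc 0 1) →
      ∀ s ∈ Icc (0:ℝ) T, IntervalIntegrable (fun x => f s x) volume 0 1 := by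
    intro f hf s hs
    apply ContinuousOn.intervalIntegrable
    rw [uIcc_of_le zero_le_one]
    exact sliceX hf s hs
  -- joint continuity of the composite integrands
  have hGc : ContinuousOn (fun p : ℝ × ℝ => (v1 p.1 p.2 - v2 p.1 p.2) *
      ((v1xx p.1 p.2 - u1 p.1 p.2 * v1 p.1 p.2) - (v2xx p.1 p.2 - u2 p.1 p.2 * v2 p.1 p.2)))
      (Icc 0 T ×ˢ Icc 0 1) :=
    (hv1c.sub hv2c).mul ((hv1xx_cont.sub (hu1_cont.mul hv1c)).sub
      (hv2xx_cont.sub (hu2_cont.mul hv2c)))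
  have hDxc : ContinuousOn (fun p : ℝ × ℝ => (v1x p.1 p.2 - v2x p.1 p.2)^2)
      (Icc 0 T ×ˢ Icc 0 1) := (hv1x_cont.sub hv2x_cont).pow 2
  have hH1c : ContinuousOn (fun p : ℝ × ℝ =>
      ((u1 p.1 p.2 + v1 p.1 p.2) - (u2 p.1 p.2 + v2 p.1 p.2)) * v1 p.1 p.2 *
        (v1 p.1 p.2 - v2 p.1 p.2)) (Icc 0 T ×ˢ Icc 0 1) :=
    (((hu1_cont.add hv1c).sub (hu2_cont.add hv2c)).mul hv1c).mul (hv1c.sub hv2c)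
  have hH2c : ContinuousOn (fun p : ℝ × ℝ => v1 p.1 p.2 * (v1 p.1 p.2 - v2 p.1 p.2)^2)
      (Icc 0 T ×ˢ Icc 0 1) := hv1c.mul ((hv1c.sub hv2c).pow 2)
  have hH3c : ContinuousOn (fun p : ℝ × ℝ => u2 p.1 p.2 * (v1 p.1 p.2 - v2 p.1 p.2)^2)
      (Icc 0 T ×ˢ Icc 0 1) := hu2_cont.mul ((hv1c.sub hv2c).pow 2)
  -- Step C : FTC in time, for each x
  have stepC : ∀ x ∈ Icc (0:ℝ) 1,
      (1/2) * (v1 t x - v2 t x)^2 = ∫ s in (0:ℝ)..t, (v1 s x - v2 s x) *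
        ((v1xx s x - u1 s x * v1 s x) - (v2xx s x - u2 s x * v2 s x)) := by
    intro x hx
    have hcont : ContinuousOn (fun s => (1/2 : ℝ) * (v1 s x - v2 s x)^2) (Icc 0 t) :=
      (continuousOn_const.mul (((sliceT hv1c x hx).sub (sliceT hv2c x hx)).pow 2)).mono
        (Icc_subset_Icc le_rfl htT)
    have hderiv : ∀ s ∈ Ioo 0 t, HasDerivWithinAt (fun s => (1/2 : ℝ) * (v1 s x - v2 s x)^2)
        ((v1 s x - v2 s x) * ((v1xx s x - u1 s x * v1 s x) - (v2xx s x - u2 s x * v2 s x)))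
        (Ioi s) s := by
      intro s hs
      have hsI : s ∈ Icc (0:ℝ) T := ⟨hs.1.le, hs.2.le.trans htT⟩
      have hmem : Icc (0:ℝ) T ∈ nhds s := Icc_mem_nhds hs.1 (hs.2.trans_le htT)
      have h1 : HasDerivAt (fun τ => v1 τ x) (v1xx s x - u1 s x * v1 s x) s :=
        (hv1t s hsI x hx).hasDerivAt hmem
      have h2 : HasDerivAt (fun τ => v2 τ x) (v2xx s x - u2 s x * v2 s x) s :=
        (hv2t s hsI x hx).hasDerivAt hmem
      have h3 := ((h1.sub h2).pow 2).const_mul ((1:ℝ)/2)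
      have h4 := h3.hasDerivWithinAt (s := Ioi s)
      refine h4.congr_deriv ?_
      push_cast
      simp only [Pi.sub_apply]
      ring
    have hint : IntervalIntegrable (fun s => (v1 s x - v2 s x) *
        ((v1xx s x - u1 s x * v1 s x) - (v2xx s x - u2 s x * v2 s x))) volume 0 t := by
      apply ContinuousOn.intervalIntegrable
      rw [uIcc_of_le ht0]
      exact (sliceT (f := fun s x => (v1 s x - v2 s x) * ((v1xx s x - u1 s x * v1 s x) - (v2xx s x - u2 s x * v2 s x))) hGc x hx).mono (Icc_subset_Icc le_rfl htT)
    have h := intervalIntegral.integral_eq_sub_of_hasDeriv_right_of_le ht0 hcont hderiv hint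
    rw [h, hinit x hx]
    ring
  -- Step D : integration by parts in space, for each s
  have stepD : ∀ s ∈ Icc (0:ℝ) T,
      (∫ x in (0:ℝ)..1, ((v1x s x - v2x s x)^2 +
        (v1 s x - v2 s x) * (v1xx s x - v2xx s x))) = 0 := by
    intro s hs
    have hcont : ContinuousOn (fun x => (v1 s x - v2 s x) * (v1x s x - v2x s x)) (Icc 0 1) :=
      ((sliceX hv1c s hs).sub (sliceX hv2c s hs)).mul
        ((sliceX hv1x_cont s hs).sub (sliceX hv2x_cont s hs))
    have hderiv : ∀ x ∈ Ioo (0:ℝ) 1, HasDerivWithinAt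
        (fun x => (v1 s x - v2 s x) * (v1x s x - v2x s x))
        ((v1x s x - v2x s x)^2 + (v1 s x - v2 s x) * (v1xx s x - v2xx s x)) (Ioi x) x := by
      intro x hx
      have hxJ : x ∈ Icc (0:ℝ) 1 := ⟨hx.1.le, hx.2.le⟩
      have hmem : Icc (0:ℝ) 1 ∈ nhds x := Icc_mem_nhds hx.1 hx.2
      have h1 : HasDerivAt (v1 s) (v1x s x) x := (hv1x s hs x hxJ).hasDerivAt hmem
      have h2 : HasDerivAt (v2 s) (v2x s x) x := (hv2x s hs x hxJ).hasDerivAt hmem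
      have h3 : HasDerivAt (v1x s) (v1xx s x) x := (hv1xx s hs x hxJ).hasDerivAt hmem
      have h4 : HasDerivAt (v2x s) (v2xx s x) x := (hv2xx s hs x hxJ).hasDerivAt hmem
      have h5 := (h1.sub h2).mul (h3.sub h4)
      have h6 := h5.hasDerivWithinAt (s := Ioi x)
      refine h6.congr_deriv ?_
      simp only [Pi.sub_apply]
      ring
    have hint : IntervalIntegrable (fun x => (v1x s x - v2x s x)^2 +
        (v1 s x - v2 s x) * (v1xx s x - v2xx s x)) volume 0 1 := by
      apply ContinuousOn.intervalIntegrable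
      rw [uIcc_of_le zero_le_one]
      exact (((sliceX hv1x_cont s hs).sub (sliceX hv2x_cont s hs)).pow 2).add
        (((sliceX hv1c s hs).sub (sliceX hv2c s hs)).mul
          ((sliceX hv1xx_cont s hs).sub (sliceX hv2xx_cont s hs)))
    have h := intervalIntegral.integral_eq_sub_of_hasDeriv_right_of_le zero_le_one
      hcont hderiv hint
    rw [h]
    obtain ⟨hb1, hb2, hb3, hb4⟩ := hbc s hs
    rw [hb1, hb2, hb3, hb4]
    ring
  -- Fubini for G
  have hL1 : (∫ x in (0:ℝ)..1, (1/2) * (v1 t x - v2 t x)^2)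
      = ∫ s in (0:ℝ)..t, ∫ x in (0:ℝ)..1, (v1 s x - v2 s x) *
        ((v1xx s x - u1 s x * v1 s x) - (v2xx s x - u2 s x * v2 s x)) := by
    have h1 : (∫ x in (0:ℝ)..1, (1/2) * (v1 t x - v2 t x)^2)
        = ∫ x in (0:ℝ)..1, ∫ s in (0:ℝ)..t, (v1 s x - v2 s x) *
          ((v1xx s x - u1 s x * v1 s x) - (v2xx s x - u2 s x * v2 s x)) :=
      intervalIntegral.integral_congr
        (fun x hx => stepC x (by rwa [uIcc_of_le zero_le_one] at hx))
    rw [h1]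
    rw [intervalIntegral.integral_of_le zero_le_one, intervalIntegral.integral_of_le ht0]
    simp only [intervalIntegral.integral_of_le ht0, intervalIntegral.integral_of_le zero_le_one]
    exact MeasureTheory.integral_integral_swap (aux_prod_int (H := fun s x => (v1 s x - v2 s x) * ((v1xx s x - u1 s x * v1 s x) - (v2xx s x - u2 s x * v2 s x))) ht0 htT hGc)
  -- time integrability of the inner integrals
  have IG : IntervalIntegrable (fun s => ∫ x in (0:ℝ)..1, (v1 s x - v2 s x) * ((v1xx s x - u1 s x * v1 s x) - (v2xx s x - u2 s x * v2 s x))) volume 0 t := aux_time_int (H := fun s x => (v1 s x - v2 s x) * ((v1xx s x - u1 s x * v1 s x) - (v2xx s x - u2 s x * v2 s x))) ht0 htT hGc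
  have IDx : IntervalIntegrable (fun s => ∫ x in (0:ℝ)..1, (v1x s x - v2x s x)^2) volume 0 t := aux_time_int (H := fun s x => (v1x s x - v2x s x)^2) ht0 htT hDxc
  have IH1 : IntervalIntegrable (fun s => ∫ x in (0:ℝ)..1, ((u1 s x + v1 s x) - (u2 s x + v2 s x)) * v1 s x * (v1 s x - v2 s x)) volume 0 t := aux_time_int (H := fun s x => ((u1 s x + v1 s x) - (u2 s x + v2 s x)) * v1 s x * (v1 s x - v2 s x)) ht0 htT hH1c
  have IH2 : IntervalIntegrable (fun s => ∫ x in (0:ℝ)..1, v1 s x * (v1 s x - v2 s x)^2) volume 0 t := aux_time_int (H := fun s x => v1 s x * (v1 s x - v2 s x)^2) ht0 htT hH2c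
  have IH3 : IntervalIntegrable (fun s => ∫ x in (0:ℝ)..1, u2 s x * (v1 s x - v2 s x)^2) volume 0 t := aux_time_int (H := fun s x => u2 s x * (v1 s x - v2 s x)^2) ht0 htT hH3c
  -- inner identity for each time s
  have e1 : ∀ s ∈ Icc (0:ℝ) t,
      (∫ x in (0:ℝ)..1, (v1 s x - v2 s x) *
          ((v1xx s x - u1 s x * v1 s x) - (v2xx s x - u2 s x * v2 s x)))
        + (∫ x in (0:ℝ)..1, (v1x s x - v2x s x)^2)
      = -(∫ x in (0:ℝ)..1, ((u1 s x + v1 s x) - (u2 s x + v2 s x)) * v1 s x * (v1 s x - v2 s x))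
        + (∫ x in (0:ℝ)..1, v1 s x * (v1 s x - v2 s x)^2)
        - (∫ x in (0:ℝ)..1, u2 s x * (v1 s x - v2 s x)^2) := by
    intro s hs
    have hsI : s ∈ Icc (0:ℝ) T := Icc_subset_Icc le_rfl htT hs
    have iG : IntervalIntegrable (fun x => (v1 s x - v2 s x) * ((v1xx s x - u1 s x * v1 s x) - (v2xx s x - u2 s x * v2 s x))) volume 0 1 := xint (f := fun s x => (v1 s x - v2 s x) * ((v1xx s x - u1 s x * v1 s x) - (v2xx s x - u2 s x * v2 s x))) hGc s hsI
    have iDx : IntervalIntegrable (fun x => (v1x s x - v2x s x)^2) volume 0 1 := xint (f := fun s x => (v1x s x - v2x s x)^2) hDxc s hsI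
    have iH1 : IntervalIntegrable (fun x => ((u1 s x + v1 s x) - (u2 s x + v2 s x)) * v1 s x * (v1 s x - v2 s x)) volume 0 1 := xint (f := fun s x => ((u1 s x + v1 s x) - (u2 s x + v2 s x)) * v1 s x * (v1 s x - v2 s x)) hH1c s hsI
    have iH2 : IntervalIntegrable (fun x => v1 s x * (v1 s x - v2 s x)^2) volume 0 1 := xint (f := fun s x => v1 s x * (v1 s x - v2 s x)^2) hH2c s hsI
    have iH3 : IntervalIntegrable (fun x => u2 s x * (v1 s x - v2 s x)^2) volume 0 1 := xint (f := fun s x => u2 s x * (v1 s x - v2 s x)^2) hH3c s hsI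
    have iH1n : IntervalIntegrable (fun x =>
        -(((u1 s x + v1 s x) - (u2 s x + v2 s x)) * v1 s x * (v1 s x - v2 s x))) volume 0 1 :=
      iH1.neg
    have key : (∫ x in (0:ℝ)..1, ((v1 s x - v2 s x) *
          ((v1xx s x - u1 s x * v1 s x) - (v2xx s x - u2 s x * v2 s x)) + (v1x s x - v2x s x)^2))
        = ∫ x in (0:ℝ)..1, (-(((u1 s x + v1 s x) - (u2 s x + v2 s x)) * v1 s x * (v1 s x - v2 s x))
            + v1 s x * (v1 s x - v2 s x)^2 - u2 s x * (v1 s x - v2 s x)^2) := by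
      rw [← sub_eq_zero,
        ← intervalIntegral.integral_sub (iG.add iDx) ((iH1n.add iH2).sub iH3)]
      exact (intervalIntegral.integral_congr
        (fun x _ => by ring)).trans (stepD s hsI)
    rw [← intervalIntegral.integral_add iG iDx, key,
      intervalIntegral.integral_sub (iH1n.add iH2) iH3,
      intervalIntegral.integral_add iH1n iH2, intervalIntegral.integral_neg]
  -- final assembly
  rw [hL1]
  apply le_of_eq
  have IH1n : IntervalIntegrable (fun s =>
      -(∫ x in (0:ℝ)..1, ((u1 s x + v1 s x) - (u2 s x + v2 s x)) * v1 s x * (v1 s x - v2 s x)))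
      volume 0 t := IH1.neg
  have key2 : (∫ s in (0:ℝ)..t, ((∫ x in (0:ℝ)..1, (v1 s x - v2 s x) *
        ((v1xx s x - u1 s x * v1 s x) - (v2xx s x - u2 s x * v2 s x)))
        + ∫ x in (0:ℝ)..1, (v1x s x - v2x s x)^2))
      = ∫ s in (0:ℝ)..t,
        (-(∫ x in (0:ℝ)..1, ((u1 s x + v1 s x) - (u2 s x + v2 s x)) * v1 s x * (v1 s x - v2 s x))
          + (∫ x in (0:ℝ)..1, v1 s x * (v1 s x - v2 s x)^2)
          - ∫ x in (0:ℝ)..1, u2 s x * (v1 s x - v2 s x)^2) := by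
    apply intervalIntegral.integral_congr
    intro s hs
    exact e1 s (by rwa [uIcc_of_le ht0] at hs)
  rw [← intervalIntegral.integral_add IG IDx, key2,
    intervalIntegral.integral_sub (IH1n.add IH2) IH3,
    intervalIntegral.integral_add IH1n IH2, intervalIntegral.integral_neg]
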